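/- arXiv:2211.16131 — 2 statements merged into one kernel-verified Lean document; each statement's English description precedes it below -/
import Mathlib

section
/- Let $\alpha \in (1, 2)$, $\mu$ a non-zero finite measure on $S^{d-1}$ satisfying $\eta |\lambda|^2 \leq \int_{S^{d-1}} |\langle \lambda, \theta\rangle|^2 \, d\mu(\theta)$ for all $\lambda \in \mathbb{R}^d$ and some $\eta > 0$, and let $\psi_1(q) = \int_{S^{d-1}} \int_0^1 (e^{i r \langle q, \theta\rangle} - 1 - i r \langle q, \theta \rangle)\, \frac{dr}{r^{1+\alpha}}\, d\mu(\theta)$. Then there exists $\eta' > 0$ such that for all $q \in \mathbb{R}^d$, $\mathrm{Re}(\psi_1(q)) \leq -\eta' (|q|^\alpha \wedge |q|^2)$. -/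
open MeasureTheory Complex
open scoped RealInnerProductSpace

lemma expbnd (t : ℝ) : ‖Complex.exp (Complex.I * t) - 1 - Complex.I * t‖ ≤ 3 * t ^ 2 := by
  have habs : ‖Complex.I * (t:ℂ)‖ = |t| := by
    rw [norm_mul, Complex.norm_I, Complex.norm_real, Real.norm_eq_abs, one_mul]
  rcases le_or_gt |t| 1 with h | h
  · have h1 : ‖Complex.I * (t:ℂ)‖ ≤ 1 := by rw [habs]; exact h
    have := Complex.exp_bound h1 (n := 2) (by norm_num)
    have hsum : (∑ m ∈ Finset.range 2, (Complex.I * t) ^ m / m.factorial) = 1 + Complex.I * t := by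
      simp [Finset.sum_range_succ]
    rw [hsum] at this
    have he : Complex.exp (Complex.I * t) - (1 + Complex.I * t)
        = Complex.exp (Complex.I * t) - 1 - Complex.I * t := by ring
    rw [he, habs] at this
    refine this.trans ?_
    rw [_root_.sq_abs]
    norm_num [Nat.factorial]
    nlinarith [sq_nonneg t]
  · have h2 : ‖Complex.exp (Complex.I * t)‖ = 1 := by
      rw [Complex.norm_exp]
      simp [Complex.mul_re]
    calc ‖Complex.exp (Complex.I * t) - 1 - Complex.I * t‖
        ≤ ‖Complex.exp (Complex.I * t) - 1‖ + ‖Complex.I * (t:ℂ)‖ := by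
          apply norm_sub_le
      _ ≤ (‖Complex.exp (Complex.I * t)‖ + ‖(1:ℂ)‖) + |t| := by
          rw [habs]; gcongr; apply norm_sub_le
      _ = 2 + |t| := by rw [h2]; norm_num
      _ ≤ 3 * t ^ 2 := by nlinarith [_root_.sq_abs t, abs_nonneg t]

lemma reeq (t : ℝ) (c : ℝ) :
    ((Complex.exp (Complex.I * t) - 1 - Complex.I * t) * (c : ℂ)).re = (Real.cos t - 1) * c := by
  simp [Complex.mul_re, Complex.exp_re, Complex.exp_im, Complex.mul_im]

section
variable {α : ℝ}

lemma rpow_int_Ioc (hα2 : α < 2) (b : ℝ) :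
    IntegrableOn (fun r : ℝ => r ^ (1 - α)) (Set.Ioc 0 b) :=
  (intervalIntegral.intervalIntegrable_rpow' (by linarith)).1

lemma rpow_int_val (hα2 : α < 2) {b : ℝ} (hb : 0 ≤ b) :
    ∫ r in Set.Ioc (0:ℝ) b, r ^ (1 - α) = b ^ (2 - α) / (2 - α) := by
  rw [← intervalIntegral.integral_of_le hb,
    integral_rpow (Or.inl (by linarith : (-1:ℝ) < 1 - α)),
    show (1:ℝ) - α + 1 = 2 - α from by ring,
    Real.zero_rpow (by linarith : (2:ℝ) - α ≠ 0), sub_zero]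

variable (α) in
noncomputable def gg (x : ℝ) (r : ℝ) : ℂ :=
  (Complex.exp (Complex.I * ((r * x : ℝ) : ℂ)) - 1 - Complex.I * ((r * x : ℝ) : ℂ))
    * ((r ^ (-(1 + α)) : ℝ) : ℂ)

lemma gg_norm (x : ℝ) {r : ℝ} (hr : 0 < r) :
    ‖gg α x r‖ ≤ 3 * x ^ 2 * r ^ (1 - α) := by
  have hpow : (r : ℝ) ^ (2:ℕ) * r ^ (-(1+α)) = r ^ (1-α) := by
    rw [← Real.rpow_natCast r 2, ← Real.rpow_add hr]; congr 1; ring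
  have h1 : ‖gg α x r‖
      = ‖Complex.exp (Complex.I * ((r*x:ℝ):ℂ)) - 1 - Complex.I * ((r*x:ℝ):ℂ)‖
        * (r ^ (-(1+α))) := by
    rw [gg, norm_mul, Complex.norm_real, Real.norm_eq_abs,
      _root_.abs_of_nonneg (Real.rpow_nonneg hr.le _)]
  rw [h1]
  calc _ ≤ (3 * (r*x) ^ 2) * (r ^ (-(1+α))) := by
        have := expbnd (r*x)
        have h0 := Real.rpow_nonneg hr.le (-(1+α))
        nlinarith [norm_nonneg (Complex.exp (Complex.I * ((r*x:ℝ):ℂ)) - 1 - Complex.I * ((r*x:ℝ):ℂ))]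
    _ = 3 * x ^ 2 * r ^ (1-α) := by rw [← hpow]; ring

lemma gg_cont_part (x : ℝ) : Continuous fun r : ℝ =>
    (Complex.exp (Complex.I * ((r * x : ℝ) : ℂ)) - 1 - Complex.I * ((r * x : ℝ) : ℂ)) := by
  fun_prop

lemma gg_aesm (x : ℝ) {b : ℝ} :
    AEStronglyMeasurable (gg α x) (volume.restrict (Set.Ioc 0 b)) := by
  apply AEStronglyMeasurable.mul
  · exact (gg_cont_part x).aestronglyMeasurable
  · have hco : ContinuousOn (fun r : ℝ => r ^ (-(1+α))) (Set.Ioc 0 b) := by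
      intro r hr
      exact (Real.continuousAt_rpow_const r _ (Or.inl (ne_of_gt hr.1))).continuousWithinAt
    exact Complex.continuous_ofReal.comp_aestronglyMeasurable
      (hco.aemeasurable measurableSet_Ioc).aestronglyMeasurable

lemma gg_int (hα2 : α < 2) (x : ℝ) {b : ℝ} (hb : b ≤ 1) :
    IntegrableOn (gg α x) (Set.Ioc 0 b) := by
  apply Integrable.mono' ((rpow_int_Ioc hα2 b).const_mul (3 * x ^ 2)) (gg_aesm x)
  rw [ae_restrict_iff' measurableSet_Ioc]
  exact Filter.Eventually.of_forall fun r hr => gg_norm x hr.1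

lemma gg_norm_integral (hα2 : α < 2) (x : ℝ) :
    ‖∫ r in Set.Ioc (0:ℝ) 1, gg α x r‖ ≤ 3 * x ^ 2 / (2 - α) := by
  have h := norm_integral_le_of_norm_le ((rpow_int_Ioc hα2 1).const_mul (3 * x ^ 2))
    (by rw [ae_restrict_iff' measurableSet_Ioc]
        exact Filter.Eventually.of_forall fun r hr => gg_norm x hr.1)
  refine h.trans ?_
  rw [integral_const_mul, rpow_int_val hα2 (zero_le_one), Real.one_rpow]
  ring_nf
  exact le_refl _

end
lemma cos_quad {t : ℝ} (ht : |t| ≤ 1) : Real.cos t - 1 ≤ -(1/4) * t ^ 2 := by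
  have h := (abs_sub_le_iff.1 (Real.cos_bound ht)).1
  have h2 : t ^ 2 ≤ 1 := by nlinarith [_root_.sq_abs t, abs_nonneg t]
  have h4 : |t| ^ 4 ≤ t ^ 2 := by nlinarith [_root_.sq_abs t, sq_nonneg (t^2)]
  nlinarith

lemma rpow_alg {α r : ℝ} (hr : 0 < r) : r ^ (2:ℕ) * r ^ (-(1+α)) = r ^ (1-α) := by
  rw [← Real.rpow_natCast r 2, ← Real.rpow_add hr]; congr 1; ring

lemma key1d {α : ℝ} (hα : 1 < α) (hα2 : α < 2) (x : ℝ) :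
    (∫ r in Set.Ioc (0:ℝ) 1, gg α x r).re
      ≤ -(1/(4*(2-α))) * min (x^2) (|x| ^ α) := by
  have h2α : (0:ℝ) < 2 - α := by linarith
  have hre : ∀ r : ℝ, (gg α x r).re = (Real.cos (r*x) - 1) * (r ^ (-(1+α))) :=
    fun r => reeq (r*x) _
  have hint := gg_int hα2 x (le_refl (1:ℝ))
  have hre_int : (∫ r in Set.Ioc (0:ℝ) 1, gg α x r).re
      = ∫ r in Set.Ioc (0:ℝ) 1, (Real.cos (r*x) - 1) * (r ^ (-(1+α))) := by
    have h := integral_re hint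
    simp only [RCLike.re_to_complex] at h
    rw [← h]
    exact integral_congr_ae (Filter.Eventually.of_forall fun r => hre r)
  rw [hre_int]
  rcases eq_or_ne x 0 with rfl | hx
  · simp [Real.zero_rpow (by linarith : α ≠ 0)]
  have hxpos : 0 < |x| := abs_pos.2 hx
  set b : ℝ := min 1 |x|⁻¹ with hbdef
  have hb0 : 0 < b := lt_min one_pos (inv_pos.2 hxpos)
  have hb1 : b ≤ 1 := min_le_left _ _
  have hhInt : IntegrableOn (fun r => (Real.cos (r*x) - 1) * (r ^ (-(1+α)))) (Set.Ioc 0 1) := by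
    have h := hint.re
    simp only [RCLike.re_to_complex] at h
    have he : (fun r => (gg α x r).re) = fun r => (Real.cos (r*x) - 1) * (r ^ (-(1+α))) :=
      funext hre
    rwa [he] at h
  have hsub1 : Set.Ioc (0:ℝ) b ⊆ Set.Ioc 0 1 := Set.Ioc_subset_Ioc_right hb1
  have hsub2 : Set.Ioc b (1:ℝ) ⊆ Set.Ioc 0 1 := Set.Ioc_subset_Ioc_left hb0.le
  have hunion : Set.Ioc (0:ℝ) b ∪ Set.Ioc b 1 = Set.Ioc 0 1 := Set.Ioc_union_Ioc_eq_Ioc hb0.le hb1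
  have heq : ∫ r in Set.Ioc (0:ℝ) 1, (Real.cos (r*x) - 1) * (r ^ (-(1+α)))
      = (∫ r in Set.Ioc (0:ℝ) b, (Real.cos (r*x) - 1) * (r ^ (-(1+α))))
        + ∫ r in Set.Ioc b 1, (Real.cos (r*x) - 1) * (r ^ (-(1+α))) := by
    rw [← hunion]
    exact setIntegral_union (Set.Ioc_disjoint_Ioc_of_le le_rfl) measurableSet_Ioc
      (hhInt.mono_set hsub1) (hhInt.mono_set hsub2)
  have hpart2 : ∫ r in Set.Ioc b 1, (Real.cos (r*x) - 1) * (r ^ (-(1+α))) ≤ 0 := by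
    apply setIntegral_nonpos measurableSet_Ioc
    intro r hr
    have hr0 : (0:ℝ) < r := hb0.trans hr.1
    have hc := Real.cos_le_one (r*x)
    have hp := Real.rpow_nonneg hr0.le (-(1+α))
    nlinarith
  have hpart1 : ∫ r in Set.Ioc (0:ℝ) b, (Real.cos (r*x) - 1) * (r ^ (-(1+α)))
      ≤ ∫ r in Set.Ioc (0:ℝ) b, -(1/4) * x^2 * r ^ (1-α) := by
    apply setIntegral_mono_on (hhInt.mono_set hsub1)
      ((rpow_int_Ioc hα2 b).const_mul (-(1/4) * x^2)) measurableSet_Ioc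
    intro r hr
    have hr0 : (0:ℝ) < r := hr.1
    have hrx : |r * x| ≤ 1 := by
      rw [abs_mul, abs_of_pos hr0]
      calc r * |x| ≤ |x|⁻¹ * |x| := by
            apply mul_le_mul_of_nonneg_right _ (abs_nonneg x)
            exact hr.2.trans (min_le_right _ _)
        _ = 1 := inv_mul_cancel₀ (ne_of_gt hxpos)
    have hcq := cos_quad hrx
    have hp := Real.rpow_nonneg hr0.le (-(1+α))
    calc (Real.cos (r*x) - 1) * (r ^ (-(1+α)))
        ≤ (-(1/4) * (r*x)^2) * (r ^ (-(1+α))) := mul_le_mul_of_nonneg_right hcq hp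
      _ = -(1/4) * x^2 * (r ^ (2:ℕ) * r ^ (-(1+α))) := by ring
      _ = -(1/4) * x^2 * r ^ (1-α) := by rw [rpow_alg hr0]
  have hval : ∫ r in Set.Ioc (0:ℝ) b, -(1/4) * x^2 * r ^ (1-α)
      = -(1/4) * x^2 * (b ^ (2-α) / (2-α)) := by
    rw [integral_const_mul, rpow_int_val hα2 hb0.le]
  have hmin : min (x^2) (|x| ^ α) ≤ x^2 * b ^ (2-α) := by
    rcases le_or_gt |x| 1 with hx1 | hx1
    · have hbeq : b = 1 := min_eq_left (by
        rw [le_inv_comm₀ one_pos hxpos]; simpa using hx1)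
      rw [hbeq, Real.one_rpow, mul_one]
      exact min_le_left _ _
    · have hbeq : b = |x|⁻¹ := min_eq_right (by
        rw [inv_le_comm₀ hxpos one_pos]; simpa using hx1.le)
      have hbp : b ^ (2-α) = |x| ^ (α-2) := by
        rw [hbeq, Real.inv_rpow (abs_nonneg x), ← Real.rpow_neg (abs_nonneg x)]
        congr 1; ring
      have hfin : x^2 * b ^ (2-α) = |x| ^ α := by
        rw [hbp, ← _root_.sq_abs, ← Real.rpow_natCast |x| 2, ← Real.rpow_add hxpos]
        norm_num
      rw [hfin]
      exact min_le_right _ _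
  have hcoef : -(1/4) * x^2 * (b ^ (2-α) / (2-α)) = -(1/(4*(2-α))) * (x^2 * b ^ (2-α)) := by
    field_simp
  have hfinal : ∫ r in Set.Ioc (0:ℝ) 1, (Real.cos (r*x) - 1) * (r ^ (-(1+α)))
      ≤ -(1/4) * x^2 * (b ^ (2-α) / (2-α)) := by
    rw [heq]
    have h1 := hpart1
    rw [hval] at h1
    linarith
  refine hfinal.trans ?_
  rw [hcoef]
  refine mul_le_mul_of_nonpos_left hmin ?_
  have hK : (0:ℝ) < 1/(4*(2-α)) := by positivity
  linarith
lemma sq_le_rpow_abs {α t : ℝ} (hα2 : α ≤ 2) (ht : |t| ≤ 1) : t ^ 2 ≤ |t| ^ α := by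
  rcases eq_or_ne t 0 with rfl | h
  · simpa using Real.rpow_nonneg (abs_nonneg (0:ℝ)) α
  · rw [← _root_.sq_abs, ← Real.rpow_natCast |t| 2]
    exact Real.rpow_le_rpow_of_exponent_ge (abs_pos.2 h) ht (by push_cast; linarith)

lemma min_lower {α t Q : ℝ} (hα : 1 < α) (hα2 : α < 2) (hQ : 1 ≤ Q) (ht : |t| ≤ Q) :
    Q ^ (α - 2) * t ^ 2 ≤ min (t ^ 2) (|t| ^ α) := by
  have hQ1 : Q ^ (α - 2) ≤ 1 :=
    Real.rpow_le_one_of_one_le_of_nonpos hQ (by linarith)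
  have hQ0 : 0 ≤ Q ^ (α - 2) := Real.rpow_nonneg (by linarith) _
  apply le_min
  · nlinarith [sq_nonneg t]
  · rcases eq_or_ne t 0 with rfl | h0
    · simpa using Real.rpow_nonneg (abs_nonneg (0:ℝ)) α
    rcases le_or_gt |t| 1 with h1 | h1
    · have := sq_le_rpow_abs hα2.le h1
      nlinarith [sq_nonneg t]
    · have habs : 0 < |t| := abs_pos.2 h0
      have hmono : Q ^ (α - 2) ≤ |t| ^ (α - 2) :=
        Real.rpow_le_rpow_of_nonpos habs ht (by linarith)
      have hid : |t| ^ (α - 2) * t ^ 2 = |t| ^ α := by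
        rw [← _root_.sq_abs, ← Real.rpow_natCast |t| 2, ← Real.rpow_add habs]
        congr 1; push_cast; ring
      calc Q ^ (α-2) * t ^ 2 ≤ |t| ^ (α-2) * t ^ 2 := by nlinarith [sq_nonneg t]
        _ = |t| ^ α := hid



/-- The truncated symbol `ψ₁` of a non-degenerate `α`-stable Lévy measure satisfies
`Re ψ₁(q) ≤ -η' (|q|^α ∧ |q|^2)`. -/
theorem stmt_12 (d : ℕ) (α : ℝ) (hα : 1 < α) (hα2 : α < 2)
    (μ : Measure (Metric.sphere (0 : EuclideanSpace ℝ (Fin d)) 1)) [IsFiniteMeasure μ]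
    (hμ : μ ≠ 0)
    (η : ℝ) (hη : 0 < η)
    (hND : ∀ lam : EuclideanSpace ℝ (Fin d),
      η * ‖lam‖ ^ 2 ≤ ∫ θ : Metric.sphere (0 : EuclideanSpace ℝ (Fin d)) 1,
        (⟪lam, (θ : EuclideanSpace ℝ (Fin d))⟫ : ℝ) ^ 2 ∂μ) :
    ∃ η' : ℝ, 0 < η' ∧ ∀ q : EuclideanSpace ℝ (Fin d),
      (∫ θ : Metric.sphere (0 : EuclideanSpace ℝ (Fin d)) 1,
        (∫ r in Set.Ioc (0 : ℝ) 1,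
          ((Complex.exp (Complex.I * ((r * ⟪q, (θ : EuclideanSpace ℝ (Fin d))⟫ : ℝ) : ℂ))
              - 1 - Complex.I * ((r * ⟪q, (θ : EuclideanSpace ℝ (Fin d))⟫ : ℝ) : ℂ))
            * ((r ^ (-(1 + α)) : ℝ) : ℂ))) ∂μ).re
        ≤ -η' * min (‖q‖ ^ α) (‖q‖ ^ 2) := by
  have h2α : (0:ℝ) < 2 - α := by linarith
  set K : ℝ := 1/(4*(2-α)) with hKdef
  have hK : 0 < K := by positivity
  refine ⟨K * η, mul_pos hK hη, fun q => ?_⟩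
  set x : Metric.sphere (0 : EuclideanSpace ℝ (Fin d)) 1 → ℝ := fun θ => ⟪q, (θ : EuclideanSpace ℝ (Fin d))⟫ with hxdef
  have hxcont : Continuous x := continuous_const.inner continuous_subtype_val
  have hxle : ∀ θ : Metric.sphere (0 : EuclideanSpace ℝ (Fin d)) 1, |x θ| ≤ ‖q‖ := by
    intro θ
    calc |x θ| ≤ ‖q‖ * ‖(θ : EuclideanSpace ℝ (Fin d))‖ := abs_real_inner_le_norm _ _
      _ = ‖q‖ := by rw [norm_eq_of_mem_sphere θ, mul_one]
  have hx2 : ∀ θ : Metric.sphere (0 : EuclideanSpace ℝ (Fin d)) 1, (x θ) ^ 2 ≤ ‖q‖ ^ 2 := by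
    intro θ
    nlinarith [hxle θ, _root_.sq_abs (x θ), abs_nonneg (x θ), norm_nonneg q]
  set I : Metric.sphere (0 : EuclideanSpace ℝ (Fin d)) 1 → ℂ := fun θ => ∫ r in Set.Ioc (0:ℝ) 1, gg α (x θ) r with hIdef
  -- measurability of I
  set F : Metric.sphere (0 : EuclideanSpace ℝ (Fin d)) 1 × ℝ → ℂ := fun p =>
    (Complex.exp (Complex.I * ((p.2 * x p.1 : ℝ) : ℂ)) - 1
      - Complex.I * ((p.2 * x p.1 : ℝ) : ℂ))
      * ((Real.exp (Real.log p.2 * (-(1+α))) : ℝ) : ℂ) with hFdef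
  have hm1 : Measurable fun p : Metric.sphere (0 : EuclideanSpace ℝ (Fin d)) 1 × ℝ => p.2 * x p.1 :=
    measurable_snd.mul (hxcont.measurable.comp measurable_fst)
  have hof : Measurable fun p : Metric.sphere (0 : EuclideanSpace ℝ (Fin d)) 1 × ℝ => ((p.2 * x p.1 : ℝ) : ℂ) :=
    Complex.measurable_ofReal.comp hm1
  have hexp : Measurable fun p : Metric.sphere (0 : EuclideanSpace ℝ (Fin d)) 1 × ℝ => Complex.exp (Complex.I * ((p.2 * x p.1 : ℝ) : ℂ)) :=
    Complex.measurable_exp.comp (hof.const_mul Complex.I)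
  have hlog : Measurable fun p : Metric.sphere (0 : EuclideanSpace ℝ (Fin d)) 1 × ℝ => ((Real.exp (Real.log p.2 * (-(1+α))) : ℝ) : ℂ) :=
    Complex.measurable_ofReal.comp
      (Real.measurable_exp.comp ((Real.measurable_log.comp measurable_snd).mul_const _))
  have hF : Measurable F := ((hexp.sub measurable_const).sub (hof.const_mul Complex.I)).mul hlog
  have hIeq : I = fun θ => ∫ r, F (θ, r) ∂(volume.restrict (Set.Ioc (0:ℝ) 1)) := by
    funext θ
    refine integral_congr_ae ?_
    filter_upwards [ae_restrict_mem measurableSet_Ioc] with r hr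
    show gg α (x θ) r = F (θ, r)
    rw [gg, hFdef, Real.rpow_def_of_pos hr.1]
  have hIaesm : AEStronglyMeasurable I μ := by
    rw [hIeq]
    exact (hF.stronglyMeasurable.integral_prod_right').aestronglyMeasurable
  have hIb : ∀ θ : Metric.sphere (0 : EuclideanSpace ℝ (Fin d)) 1, ‖I θ‖ ≤ 3 * ‖q‖ ^ 2 / (2-α) := by
    intro θ
    refine (gg_norm_integral hα2 (x θ)).trans ?_
    exact (div_le_div_iff_of_pos_right h2α).mpr (by nlinarith [hx2 θ])
  have hIInt : Integrable I μ :=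
    Integrable.mono' (integrable_const (3 * ‖q‖ ^ 2 / (2-α))) hIaesm
      (Filter.Eventually.of_forall hIb)
  -- pass to real parts
  have hre_main : (∫ θ, I θ ∂μ).re = ∫ θ, (I θ).re ∂μ := by
    have h := integral_re hIInt
    simp only [RCLike.re_to_complex] at h
    exact h.symm
  set m : Metric.sphere (0 : EuclideanSpace ℝ (Fin d)) 1 → ℝ := fun θ => min ((x θ) ^ 2) (|x θ| ^ α) with hmdef
  have hmcont : Continuous m := by
    apply Continuous.min
    · exact hxcont.pow 2
    · exact hxcont.abs.rpow_const fun θ => Or.inr (by linarith)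
  have hm_nonneg : ∀ θ, 0 ≤ m θ := fun θ =>
    le_min (sq_nonneg _) (Real.rpow_nonneg (abs_nonneg _) _)
  have hm_le : ∀ θ, m θ ≤ ‖q‖ ^ 2 := fun θ => (min_le_left _ _).trans (hx2 θ)
  have hmInt : Integrable m μ := by
    refine Integrable.mono' (integrable_const (‖q‖ ^ 2)) hmcont.aestronglyMeasurable
      (Filter.Eventually.of_forall fun θ => ?_)
    rw [Real.norm_eq_abs, _root_.abs_of_nonneg (hm_nonneg θ)]
    exact hm_le θ
  have hx2Int : Integrable (fun θ => (x θ) ^ 2) μ := by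
    refine Integrable.mono' (integrable_const (‖q‖ ^ 2))
      ((hxcont.pow 2).aestronglyMeasurable) (Filter.Eventually.of_forall fun θ => ?_)
    rw [Real.norm_eq_abs, _root_.abs_of_nonneg (sq_nonneg _)]
    exact hx2 θ
  have hreInt : Integrable (fun θ => (I θ).re) μ := by
    have h := hIInt.re
    simpa only [RCLike.re_to_complex] using h
  have step1 : ∫ θ, (I θ).re ∂μ ≤ ∫ θ, -K * m θ ∂μ := by
    refine integral_mono hreInt (hmInt.const_mul _) fun θ => ?_
    have := key1d hα hα2 (x θ)
    simpa [hKdef] using this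
  have step1' : ∫ θ, -K * m θ ∂μ = -K * ∫ θ, m θ ∂μ := integral_const_mul _ _
  have step2 : η * min (‖q‖ ^ α) (‖q‖ ^ 2) ≤ ∫ θ, m θ ∂μ := by
    rcases eq_or_ne q 0 with rfl | hq0
    · have hx0 : ∀ θ : Metric.sphere (0 : EuclideanSpace ℝ (Fin d)) 1, x θ = 0 := fun θ => by simp [hxdef]
      have : ∫ θ, m θ ∂μ = 0 := by
        rw [show m = fun _ => (0:ℝ) by funext θ; simp [hmdef, hx0 θ, Real.zero_rpow (by linarith : α ≠ 0)]]
        simp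
      rw [this]
      simp [Real.zero_rpow (by linarith : α ≠ 0)]
    have hqpos : 0 < ‖q‖ := norm_pos_iff.2 hq0
    rcases le_or_gt ‖q‖ 1 with hq1 | hq1
    · have hminq : min (‖q‖ ^ α) (‖q‖ ^ 2) = ‖q‖ ^ 2 := by
        refine min_eq_right ?_
        rw [← Real.rpow_natCast ‖q‖ 2]
        exact Real.rpow_le_rpow_of_exponent_ge hqpos hq1 (by push_cast; linarith)
      rw [hminq]
      have hpt : ∀ θ, (x θ) ^ 2 ≤ m θ := by
        intro θ
        exact le_min (le_refl _) (sq_le_rpow_abs hα2.le ((hxle θ).trans hq1))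
      calc η * ‖q‖ ^ 2 ≤ ∫ θ, (x θ) ^ 2 ∂μ := hND q
        _ ≤ ∫ θ, m θ ∂μ := integral_mono hx2Int hmInt hpt
    · have hminq : min (‖q‖ ^ α) (‖q‖ ^ 2) = ‖q‖ ^ α := by
        refine min_eq_left ?_
        rw [← Real.rpow_natCast ‖q‖ 2]
        exact Real.rpow_le_rpow_of_exponent_le hq1.le (by push_cast; linarith)
      rw [hminq]
      have hpt : ∀ θ, ‖q‖ ^ (α - 2) * (x θ) ^ 2 ≤ m θ := fun θ =>
        min_lower hα hα2 hq1.le (hxle θ)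
      have hc0 : 0 ≤ ‖q‖ ^ (α - 2) := Real.rpow_nonneg hqpos.le _
      have hpow : ‖q‖ ^ (α - 2) * ‖q‖ ^ 2 = ‖q‖ ^ α := by
        rw [← Real.rpow_natCast ‖q‖ 2, ← Real.rpow_add hqpos]
        congr 1; push_cast; ring
      calc η * ‖q‖ ^ α = ‖q‖ ^ (α - 2) * (η * ‖q‖ ^ 2) := by rw [← hpow]; ring
        _ ≤ ‖q‖ ^ (α - 2) * ∫ θ, (x θ) ^ 2 ∂μ :=
            mul_le_mul_of_nonneg_left (hND q) hc0
        _ = ∫ θ, ‖q‖ ^ (α - 2) * (x θ) ^ 2 ∂μ := (integral_const_mul _ _).symm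
        _ ≤ ∫ θ, m θ ∂μ := by
            refine integral_mono (hx2Int.const_mul _) hmInt hpt
  have final : (∫ θ, I θ ∂μ).re ≤ -(K * η) * min (‖q‖ ^ α) (‖q‖ ^ 2) := by
    rw [hre_main]
    refine (step1.trans_eq step1').trans ?_
    have := mul_le_mul_of_nonpos_left step2 (by linarith : -K ≤ 0)
    linarith [this]
  exact final
end

section
/- Fix $t \in (0, T]$, a probability measure $\mu \in \mathcal{P}_1(\mathbb{R}^d)$, matrices $A, K_t \in M_d(\mathbb{R})$, and a density $p(t, \cdot) \in \mathcal{S}(\mathbb{R}^d)$. Define $q(\mu, t, y) = \int_{\mathbb{R}^d} p(t, y - e^{tA}x - K_t M(\mu))\, d\mu(x)$ where $M(\mu) = \int x\, d\mu(x)$. Then for fixed $t$ and $y$, the map $\mu \mapsto q(\mu, t, y)$ admits a linear derivative given by $\frac{\delta q}{\delta m}(\mu, t, y)(v) = p(t, y - e^{tA}v - K_t M(\mu)) - \int_{\mathbb{R}^d} \partial_y p(t, y - e^{tA}x - K_t M(\mu)) \cdot (K_t v)\, d\mu(x)$. -/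
open MeasureTheory
open scoped ENNReal RealInnerProductSpace SchwartzMap

section Aux

variable {E : Type*} [NormedAddCommGroup E] [InnerProductSpace ℝ E] [CompleteSpace E]

omit [CompleteSpace E] in
lemma sm_bound_p (p : 𝓢(E, ℝ)) : ∃ C, ∀ z, ‖p z‖ ≤ C := by
  obtain ⟨C, -, hC⟩ := p.decay 0 0
  exact ⟨C, fun z => by simpa [norm_iteratedFDeriv_zero] using hC z⟩

omit [CompleteSpace E] in
lemma sm_bound_fderiv (p : 𝓢(E, ℝ)) : ∃ C, ∀ z, ‖fderiv ℝ (⇑p) z‖ ≤ C := by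
  obtain ⟨C, -, hC⟩ := (SchwartzMap.fderivCLM ℝ E ℝ p).decay 0 0
  exact ⟨C, fun z => by
    simpa [norm_iteratedFDeriv_zero, SchwartzMap.fderivCLM_apply] using hC z⟩

lemma sm_grad_inner (p : 𝓢(E, ℝ)) (z v : E) :
    ⟪gradient (⇑p) z, v⟫ = fderiv ℝ (⇑p) z v := by
  rw [gradient]; exact InnerProductSpace.toDual_symm_apply

lemma sm_norm_grad (p : 𝓢(E, ℝ)) (z : E) : ‖gradient (⇑p) z‖ = ‖fderiv ℝ (⇑p) z‖ :=
  (InnerProductSpace.toDual ℝ E).symm.norm_map _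

omit [CompleteSpace E] in
lemma sm_cont_fderiv (p : 𝓢(E, ℝ)) : Continuous (fun z => fderiv ℝ (⇑p) z) := by
  exact (SchwartzMap.fderivCLM ℝ E ℝ p).continuous

lemma sm_cont_grad (p : 𝓢(E, ℝ)) : Continuous (fun z => gradient (⇑p) z) := by
  simp only [gradient]
  exact (InnerProductSpace.toDual ℝ E).symm.continuous.comp (sm_cont_fderiv p)

lemma sm_hasDerivAt (p : 𝓢(E, ℝ)) (cx w : E) (l : ℝ) :
    HasDerivAt (fun l : ℝ => p (cx - l • w))
      (-⟪gradient (⇑p) (cx - l • w), w⟫) l := by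
  have h1 : HasDerivAt (fun l : ℝ => cx - l • w) (-w) l := by
    simpa using ((hasDerivAt_id l).smul_const w).const_sub cx
  have h2 := (p.differentiableAt (x := cx - l • w)).hasFDerivAt.comp_hasDerivAt l h1
  have h3 : fderiv ℝ (⇑p) (cx - l • w) (-w)
      = -⟪gradient (⇑p) (cx - l • w), w⟫ := by
    rw [map_neg, sm_grad_inner]
  rwa [h3] at h2

/-- bounded continuous functions are integrable against finite measures -/
lemma integrable_of_bdd {α F : Type*} [MeasurableSpace α] [TopologicalSpace α]
    [OpensMeasurableSpace α] [SecondCountableTopology α] [NormedAddCommGroup F]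
    {σ : Measure α} [IsFiniteMeasure σ]
    {f : α → F} (hf : Continuous f) {C : ℝ} (hC : ∀ x, ‖f x‖ ≤ C) :
    Integrable f σ := by
  refine ⟨hf.aestronglyMeasurable, HasFiniteIntegral.of_bounded (C := C) ?_⟩
  exact Filter.Eventually.of_forall hC

lemma integral_mix {α F : Type*} [MeasurableSpace α] [NormedAddCommGroup F]
    [NormedSpace ℝ F] {μ ν : Measure α} {f : α → F} {a b : ℝ} (ha : 0 ≤ a) (hb : 0 ≤ b)
    (hfμ : Integrable f μ) (hfν : Integrable f ν) :
    ∫ x, f x ∂(ENNReal.ofReal a • μ + ENNReal.ofReal b • ν)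
      = a • ∫ x, f x ∂μ + b • ∫ x, f x ∂ν := by
  rw [integral_add_measure (hfμ.smul_measure ENNReal.ofReal_ne_top)
      (hfν.smul_measure ENNReal.ofReal_ne_top),
    integral_smul_measure, integral_smul_measure,
    ENNReal.toReal_ofReal ha, ENNReal.toReal_ofReal hb]

end Aux

set_option maxHeartbeats 2000000 in
/-- The map `μ ↦ q(μ,t,y) = ∫ p(t, y - e^{tA}x - K_t M(μ)) dμ(x)` admits the linear
derivative `v ↦ p(t, y - e^{tA}v - K_t M(μ)) - ∫ ∂_y p(t, y - e^{tA}x - K_t M(μ)) ⋅ K_t v dμ(x)`,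
i.e. the defining identity of the linear derivative holds with this candidate. -/
theorem stmt_14 (d : ℕ) (T t : ℝ) (ht : 0 < t) (htT : t ≤ T)
    (A Kt : Matrix (Fin d) (Fin d) ℝ)
    (p : SchwartzMap (EuclideanSpace ℝ (Fin d)) ℝ)
    (y : EuclideanSpace ℝ (Fin d)) :
    ∀ μ ν : Measure (EuclideanSpace ℝ (Fin d)),
      IsProbabilityMeasure μ → IsProbabilityMeasure ν →
      Integrable (id : EuclideanSpace ℝ (Fin d) → EuclideanSpace ℝ (Fin d)) μ →
      Integrable (id : EuclideanSpace ℝ (Fin d) → EuclideanSpace ℝ (Fin d)) ν →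
      (∫ x, p (y - Matrix.toEuclideanCLM (𝕜 := ℝ) (NormedSpace.exp (t • A)) x
            - Matrix.toEuclideanCLM (𝕜 := ℝ) Kt (∫ x', x' ∂μ)) ∂μ)
        - (∫ x, p (y - Matrix.toEuclideanCLM (𝕜 := ℝ) (NormedSpace.exp (t • A)) x
            - Matrix.toEuclideanCLM (𝕜 := ℝ) Kt (∫ x', x' ∂ν)) ∂ν)
      = ∫ lam in (0 : ℝ)..1,
          ((∫ v, (p (y - Matrix.toEuclideanCLM (𝕜 := ℝ) (NormedSpace.exp (t • A)) v
              - Matrix.toEuclideanCLM (𝕜 := ℝ) Kt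
                  (∫ x', x' ∂(ENNReal.ofReal lam • μ + ENNReal.ofReal (1 - lam) • ν)))
            - ∫ x, ⟪gradient (⇑p)
                (y - Matrix.toEuclideanCLM (𝕜 := ℝ) (NormedSpace.exp (t • A)) x
                  - Matrix.toEuclideanCLM (𝕜 := ℝ) Kt
                      (∫ x', x' ∂(ENNReal.ofReal lam • μ + ENNReal.ofReal (1 - lam) • ν))),
                Matrix.toEuclideanCLM (𝕜 := ℝ) Kt v⟫
              ∂(ENNReal.ofReal lam • μ + ENNReal.ofReal (1 - lam) • ν)) ∂μ)
          - ∫ v, (p (y - Matrix.toEuclideanCLM (𝕜 := ℝ) (NormedSpace.exp (t • A)) v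
              - Matrix.toEuclideanCLM (𝕜 := ℝ) Kt
                  (∫ x', x' ∂(ENNReal.ofReal lam • μ + ENNReal.ofReal (1 - lam) • ν)))
            - ∫ x, ⟪gradient (⇑p)
                (y - Matrix.toEuclideanCLM (𝕜 := ℝ) (NormedSpace.exp (t • A)) x
                  - Matrix.toEuclideanCLM (𝕜 := ℝ) Kt
                      (∫ x', x' ∂(ENNReal.ofReal lam • μ + ENNReal.ofReal (1 - lam) • ν))),
                Matrix.toEuclideanCLM (𝕜 := ℝ) Kt v⟫
              ∂(ENNReal.ofReal lam • μ + ENNReal.ofReal (1 - lam) • ν)) ∂ν) := by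
  intro μ ν hμ hν hiμ hiν
  haveI := hμ; haveI := hν
  set B := Matrix.toEuclideanCLM (𝕜 := ℝ) (NormedSpace.exp (t • A)) with hBdef
  set C := Matrix.toEuclideanCLM (𝕜 := ℝ) Kt with hCdef
  set Mμ : (EuclideanSpace ℝ (Fin d)) := ∫ x', x' ∂μ with hMμ
  set Mν : (EuclideanSpace ℝ (Fin d)) := ∫ x', x' ∂ν with hMν
  set w : (EuclideanSpace ℝ (Fin d)) := C Mμ - C Mν with hw
  set c : (EuclideanSpace ℝ (Fin d)) → (EuclideanSpace ℝ (Fin d)) := fun x => y - B x - C Mν with hc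
  have hccont : Continuous c := (continuous_const.sub B.continuous).sub continuous_const
  obtain ⟨Cp, hCp⟩ := sm_bound_p p
  obtain ⟨Cd, hCd⟩ := sm_bound_fderiv p
  have hgradb : ∀ z : (EuclideanSpace ℝ (Fin d)), ‖gradient (⇑p) z‖ ≤ Cd := fun z => (sm_norm_grad p z) ▸ hCd z
  -- integrands
  have hPcont : ∀ l : ℝ, Continuous (fun x => p (c x - l • w)) := fun l =>
    p.continuous.comp (hccont.sub continuous_const)
  have hGcont : ∀ l : ℝ, Continuous (fun x => gradient (⇑p) (c x - l • w)) := fun l =>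
    (sm_cont_grad p).comp (hccont.sub continuous_const)
  have hPint : ∀ (l : ℝ) (σ : Measure (EuclideanSpace ℝ (Fin d))), IsFiniteMeasure σ →
      Integrable (fun x => p (c x - l • w)) σ := fun l σ hσ =>
    integrable_of_bdd (σ := σ) (hPcont l) (fun x => hCp _)
  have hGint : ∀ (l : ℝ) (σ : Measure (EuclideanSpace ℝ (Fin d))), IsFiniteMeasure σ →
      Integrable (fun x => gradient (⇑p) (c x - l • w)) σ := fun l σ hσ =>
    integrable_of_bdd (σ := σ) (hGcont l) (fun x => hgradb _)
  -- the basic scalar functions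
  set Gp : Measure (EuclideanSpace ℝ (Fin d)) → ℝ → ℝ := fun σ l => ∫ x, p (c x - l • w) ∂σ with hGp
  set Gg : Measure (EuclideanSpace ℝ (Fin d)) → ℝ → (EuclideanSpace ℝ (Fin d)) := fun σ l => ∫ x, gradient (⇑p) (c x - l • w) ∂σ with hGg
  set Dd : Measure (EuclideanSpace ℝ (Fin d)) → ℝ → ℝ := fun σ l => ∫ x, -⟪gradient (⇑p) (c x - l • w), w⟫ ∂σ
    with hDd
  -- derivative of Gp σ
  have hderivGp : ∀ (σ : Measure (EuclideanSpace ℝ (Fin d))), IsProbabilityMeasure σ → ∀ l : ℝ,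
      HasDerivAt (Gp σ) (Dd σ l) l := by
    intro σ hσ l
    haveI := hσ
    show HasDerivAt (fun l' : ℝ => ∫ x, p (c x - l' • w) ∂σ)
      (∫ x, -⟪gradient (⇑p) (c x - l • w), w⟫ ∂σ) l
    refine (hasDerivAt_integral_of_dominated_loc_of_deriv_le (Metric.ball_mem_nhds l one_pos)
      (F' := fun (l' : ℝ) (x : (EuclideanSpace ℝ (Fin d))) => -⟪gradient (⇑p) (c x - l' • w), w⟫)
      (Filter.Eventually.of_forall fun l' => (hPcont l').aestronglyMeasurable)
      (hPint l σ inferInstance)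
      ?_ ?_ (integrable_const (Cd * ‖w‖)) ?_).2
    · exact (((hGcont l).inner continuous_const).neg).aestronglyMeasurable
    · refine Filter.Eventually.of_forall fun x l' _ => ?_
      calc ‖-⟪gradient (⇑p) (c x - l' • w), w⟫‖
          = ‖⟪gradient (⇑p) (c x - l' • w), w⟫‖ := norm_neg _
        _ ≤ ‖gradient (⇑p) (c x - l' • w)‖ * ‖w‖ := norm_inner_le_norm _ _
        _ ≤ Cd * ‖w‖ := mul_le_mul_of_nonneg_right (hgradb _) (norm_nonneg _)
    · exact Filter.Eventually.of_forall fun x l' _ => sm_hasDerivAt p (c x) w l'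
  -- Dd σ l = -⟪Gg σ l, w⟫
  have hDdEq : ∀ (σ : Measure (EuclideanSpace ℝ (Fin d))), IsFiniteMeasure σ → ∀ l : ℝ,
      Dd σ l = -⟪Gg σ l, w⟫ := by
    intro σ hσ l
    haveI := hσ
    show (∫ x, -⟪gradient (⇑p) (c x - l • w), w⟫ ∂σ) = -⟪Gg σ l, w⟫
    rw [integral_neg]
    congr 1
    have hcomm : ∀ g : (EuclideanSpace ℝ (Fin d)), ⟪g, w⟫ = ⟪w, g⟫ := fun g => real_inner_comm _ _
    calc ∫ x, ⟪gradient (⇑p) (c x - l • w), w⟫ ∂σ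
        = ∫ x, ⟪w, gradient (⇑p) (c x - l • w)⟫ ∂σ := by simp only [hcomm]
      _ = ⟪w, Gg σ l⟫ := integral_inner (hGint l σ inferInstance) w
      _ = ⟪Gg σ l, w⟫ := real_inner_comm _ _
  -- continuity of Gp σ and Dd σ
  have hcontGp : ∀ (σ : Measure (EuclideanSpace ℝ (Fin d))), IsProbabilityMeasure σ → Continuous (Gp σ) := by
    intro σ hσ
    haveI := hσ
    refine continuous_of_dominated (bound := fun _ => Cp)
      (fun l => (hPcont l).aestronglyMeasurable)
      (fun l => Filter.Eventually.of_forall fun x => hCp _)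
      (integrable_const _) ?_
    refine Filter.Eventually.of_forall fun x => ?_
    exact p.continuous.comp
      (continuous_const.sub ((continuous_id.smul continuous_const)))
  have hcontDd : ∀ (σ : Measure (EuclideanSpace ℝ (Fin d))), IsProbabilityMeasure σ → Continuous (Dd σ) := by
    intro σ hσ
    haveI := hσ
    refine continuous_of_dominated (bound := fun _ => Cd * ‖w‖)
      (fun l => (((hGcont l).inner continuous_const).neg).aestronglyMeasurable)
      (fun l => Filter.Eventually.of_forall fun x => ?_)
      (integrable_const _) ?_
    · calc ‖-⟪gradient (⇑p) (c x - l • w), w⟫‖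
          = ‖⟪gradient (⇑p) (c x - l • w), w⟫‖ := norm_neg _
        _ ≤ ‖gradient (⇑p) (c x - l • w)‖ * ‖w‖ := norm_inner_le_norm _ _
        _ ≤ Cd * ‖w‖ := mul_le_mul_of_nonneg_right (hgradb _) (norm_nonneg _)
    · refine Filter.Eventually.of_forall fun x => ?_
      have hcl : Continuous fun l : ℝ => gradient (⇑p) (c x - l • w) :=
        (sm_cont_grad p).comp
          (continuous_const.sub (continuous_id.smul continuous_const))
      exact (hcl.inner continuous_const).neg
  -- F and its derivative
  set F : ℝ → ℝ := fun l => l * Gp μ l + (1 - l) * Gp ν l with hF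
  set D : ℝ → ℝ := fun l =>
    (1 * Gp μ l + l * Dd μ l) + ((-1) * Gp ν l + (1 - l) * Dd ν l) with hD
  have hderivF : ∀ l : ℝ, HasDerivAt F (D l) l := by
    intro l
    have h1 : HasDerivAt (fun l : ℝ => l * Gp μ l) (1 * Gp μ l + l * Dd μ l) l :=
      (hasDerivAt_id l).mul (hderivGp μ hμ l)
    have h2 : HasDerivAt (fun l : ℝ => (1 - l) * Gp ν l)
        ((-1) * Gp ν l + (1 - l) * Dd ν l) l := by
      have := ((hasDerivAt_id' l).const_sub 1).mul (hderivGp ν hν l)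
      exact this
    exact h1.add h2
  have hcontD : Continuous D := by
    refine Continuous.add (Continuous.add ?_ ?_) (Continuous.add ?_ ?_)
    · exact continuous_const.mul (hcontGp μ hμ)
    · exact continuous_id.mul (hcontDd μ hμ)
    · exact continuous_const.mul (hcontGp ν hν)
    · exact (continuous_const.sub continuous_id).mul (hcontDd ν hν)
  have hFTC : ∫ l in (0:ℝ)..1, D l = F 1 - F 0 :=
    intervalIntegral.integral_eq_sub_of_hasDerivAt
      (fun l _ => hderivF l) (hcontD.intervalIntegrable 0 1)
  -- identify endpoints
  have hF1 : F 1 = ∫ x, p (y - B x - C Mμ) ∂μ := by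
    show (1:ℝ) * Gp μ 1 + (1 - 1) * Gp ν 1 = _
    rw [sub_self, zero_mul, add_zero, one_mul]
    show (∫ x, p (c x - (1:ℝ) • w) ∂μ) = _
    congr 1
    ext x
    congr 1
    simp only [hc, hw, one_smul]
    abel
  have hF0 : F 0 = ∫ x, p (y - B x - C Mν) ∂ν := by
    show (0:ℝ) * Gp μ 0 + (1 - 0) * Gp ν 0 = _
    rw [zero_mul, sub_zero, one_mul, zero_add]
    show (∫ x, p (c x - (0:ℝ) • w) ∂ν) = _
    congr 1
    ext x
    congr 1
    simp only [hc, zero_smul, sub_zero]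
  -- stated integrand equals D on [0,1]
  have hEq : Set.EqOn D
      (fun lam =>
        (∫ v, (p (y - B v
              - C (∫ x', x' ∂(ENNReal.ofReal lam • μ + ENNReal.ofReal (1 - lam) • ν)))
            - ∫ x, ⟪gradient (⇑p)
                (y - B x
                  - C (∫ x', x' ∂(ENNReal.ofReal lam • μ + ENNReal.ofReal (1 - lam) • ν))),
                C v⟫
              ∂(ENNReal.ofReal lam • μ + ENNReal.ofReal (1 - lam) • ν)) ∂μ)
        - ∫ v, (p (y - B v
              - C (∫ x', x' ∂(ENNReal.ofReal lam • μ + ENNReal.ofReal (1 - lam) • ν)))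
            - ∫ x, ⟪gradient (⇑p)
                (y - B x
                  - C (∫ x', x' ∂(ENNReal.ofReal lam • μ + ENNReal.ofReal (1 - lam) • ν))),
                C v⟫
              ∂(ENNReal.ofReal lam • μ + ENNReal.ofReal (1 - lam) • ν)) ∂ν)
      (Set.uIcc (0:ℝ) 1) := by
    intro l hl
    rw [Set.uIcc_of_le zero_le_one] at hl
    obtain ⟨hl0, hl1⟩ := hl
    have hl1' : (0:ℝ) ≤ 1 - l := by linarith
    simp only
    set m : Measure (EuclideanSpace ℝ (Fin d)) := ENNReal.ofReal l • μ + ENNReal.ofReal (1 - l) • ν with hm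
    -- mean of the mixture
    have hMm : (∫ x', x' ∂m) = l • Mμ + (1 - l) • Mν := by
      rw [hm, hMμ, hMν]
      exact integral_mix hl0 hl1' hiμ hiν
    have harg : ∀ z : (EuclideanSpace ℝ (Fin d)), y - B z - C (∫ x', x' ∂m) = c z - l • w := by
      intro z
      rw [hMm, map_add, _root_.map_smul, _root_.map_smul]
      simp only [hc, hw, sub_smul, one_smul, smul_sub]
      abel
    -- collapse the inner double integral
    set G : (EuclideanSpace ℝ (Fin d)) := l • Gg μ l + (1 - l) • Gg ν l with hGdef
    have hinner : ∀ v : (EuclideanSpace ℝ (Fin d)),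
        (∫ x, ⟪gradient (⇑p) (y - B x - C (∫ x', x' ∂m)), C v⟫ ∂m) = ⟪G, C v⟫ := by
      intro v
      have hcomm : ∀ g : (EuclideanSpace ℝ (Fin d)), ⟪g, C v⟫ = ⟪C v, g⟫ := fun g => real_inner_comm _ _
      have hint : ∀ (σ : Measure (EuclideanSpace ℝ (Fin d))), IsFiniteMeasure σ →
          (∫ x, ⟪gradient (⇑p) (c x - l • w), C v⟫ ∂σ) = ⟪Gg σ l, C v⟫ := by
        intro σ hσ
        haveI := hσ
        calc ∫ x, ⟪gradient (⇑p) (c x - l • w), C v⟫ ∂σ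
            = ∫ x, ⟪C v, gradient (⇑p) (c x - l • w)⟫ ∂σ := by simp only [hcomm]
          _ = ⟪C v, Gg σ l⟫ := integral_inner (hGint l σ inferInstance) _
          _ = ⟪Gg σ l, C v⟫ := real_inner_comm _ _
      have hib : ∀ (σ : Measure (EuclideanSpace ℝ (Fin d))), IsFiniteMeasure σ →
          Integrable (fun x => ⟪gradient (⇑p) (c x - l • w), C v⟫) σ := by
        intro σ hσ
        haveI := hσ
        refine integrable_of_bdd ((hGcont l).inner continuous_const)
          (C := Cd * ‖C v‖) fun x => ?_
        exact (norm_inner_le_norm _ _).trans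
          (mul_le_mul_of_nonneg_right (hgradb _) (norm_nonneg _))
      simp_rw [harg]
      rw [hm, integral_mix hl0 hl1' (hib μ inferInstance) (hib ν inferInstance),
        hint μ inferInstance, hint ν inferInstance, hGdef,
        inner_add_left, real_inner_smul_left, real_inner_smul_left,
        smul_eq_mul, smul_eq_mul]
    -- split outer integrals
    have houter : ∀ (σ : Measure (EuclideanSpace ℝ (Fin d))), IsProbabilityMeasure σ →
        Integrable (id : (EuclideanSpace ℝ (Fin d)) → (EuclideanSpace ℝ (Fin d))) σ →
        (∫ v, (p (y - B v - C (∫ x', x' ∂m))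
            - ∫ x, ⟪gradient (⇑p) (y - B x - C (∫ x', x' ∂m)), C v⟫ ∂m) ∂σ)
          = Gp σ l - ⟪G, C (∫ x', x' ∂σ)⟫ := by
      intro σ hσ hiσ
      haveI := hσ
      have h1 : (∫ v, (p (y - B v - C (∫ x', x' ∂m))
            - ∫ x, ⟪gradient (⇑p) (y - B x - C (∫ x', x' ∂m)), C v⟫ ∂m) ∂σ)
          = ∫ v, (p (c v - l • w) - ⟪G, C v⟫) ∂σ := by
        congr 1
        ext v
        rw [hinner v, harg v]
      rw [h1]
      have hL : Integrable (fun v : (EuclideanSpace ℝ (Fin d)) => ⟪G, C v⟫) σ := by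
        have := (((innerSL ℝ) G).comp C).integrable_comp hiσ
        simpa using this
      rw [integral_sub (hPint l σ inferInstance) hL]
      congr 1
      have := (((innerSL ℝ) G).comp C).integral_comp_comm hiσ
      simpa using this
    rw [houter μ hμ hiμ, houter ν hν hiν]
    -- final algebra
    show (1 * Gp μ l + l * Dd μ l) + ((-1) * Gp ν l + (1 - l) * Dd ν l) = _
    rw [hDdEq μ inferInstance l, hDdEq ν inferInstance l]
    simp only [hGdef, hw, inner_add_left, inner_sub_right, real_inner_smul_left, ← hMμ, ← hMν]
    ring
  -- conclude
  calc (∫ x, p (y - B x - C Mμ) ∂μ) - ∫ x, p (y - B x - C Mν) ∂ν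
      = F 1 - F 0 := by rw [hF1, hF0]
    _ = ∫ l in (0:ℝ)..1, D l := hFTC.symm
    _ = _ := intervalIntegral.integral_congr hEq
end
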